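/- In the cylindrical form of the Gödel metric with line element ds² = 4a²[dt² - dr² - dy² + (sinh⁴r - sinh²r)dφ² + 2√2 sinh²r dφ dt], the circle γ(s) = (R, sα, 0, t₀) (constant r = R, y = 0, t = t₀, with α ≠ 0) has tangent vector of squared norm (sinh⁴R - sinh²R)·4a²α², which is strictly positive if and only if sinh R > 1, i.e., if and only if R > log(1+√2). Hence for R > log(1+√2) the circle is a closed timelike curve. -/
import Mathlib

open Real Matrix

/-- Gödel's metric in cylindrical coordinates `(r, φ, y, t)`:
`ds² = 4a²[dt² - dr² - dy² + (sinh⁴r - sinh²r)dφ² + 2√2 sinh²r dφ dt]`. -/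
noncomputable def godelMetricCyl (a r : ℝ) : Matrix (Fin 4) (Fin 4) ℝ :=
  (4 * a ^ 2) • !![-1, 0, 0, 0;
                   0, sinh r ^ 4 - sinh r ^ 2, 0, Real.sqrt 2 * sinh r ^ 2;
                   0, 0, -1, 0;
                   0, Real.sqrt 2 * sinh r ^ 2, 0, 1]

/-- The circle `γ(s) = (R, sα, 0, t₀)` has tangent `(0, α, 0, 0)` of squared
norm `4a²α²(sinh⁴R - sinh²R)`, which is positive iff `sinh R > 1`, iff
`R > log(1+√2)`; hence for `R > log(1+√2)` it is a closed timelike curve. -/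
theorem godel_closed_timelike_circle (a α R : ℝ) (ha : 0 < a) (hα : α ≠ 0)
    (hR : 0 < R) :
    let v : Fin 4 → ℝ := ![0, α, 0, 0]
    (v ⬝ᵥ godelMetricCyl a R *ᵥ v) = (sinh R ^ 4 - sinh R ^ 2) * (4 * a ^ 2 * α ^ 2) ∧
    ((0 : ℝ) < v ⬝ᵥ godelMetricCyl a R *ᵥ v ↔ 1 < sinh R) ∧
    ((0 : ℝ) < v ⬝ᵥ godelMetricCyl a R *ᵥ v ↔ Real.log (1 + Real.sqrt 2) < R) := by
  intro v
  have hval : (v ⬝ᵥ godelMetricCyl a R *ᵥ v) = (sinh R ^ 4 - sinh R ^ 2) * (4 * a ^ 2 * α ^ 2) := by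
    simp [godelMetricCyl, v, dotProduct, mulVec, Fin.sum_univ_four]
    ring
  have hs : 0 < sinh R := Real.sinh_pos_iff.2 hR
  have h1 : (0 : ℝ) < v ⬝ᵥ godelMetricCyl a R *ᵥ v ↔ 1 < sinh R := by
    rw [hval]
    have hfac : 0 < 4 * a ^ 2 * α ^ 2 := by positivity
    rw [mul_pos_iff_of_pos_right hfac]
    constructor
    · intro h
      nlinarith [mul_pos hs hs, mul_pos (mul_pos hs hs) hs, sq_nonneg (sinh R ^ 2 - 1), sq_nonneg (sinh R - 1)]
    · intro h
      nlinarith [mul_pos hs hs, mul_pos (mul_pos hs hs) hs]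
  refine ⟨hval, h1, ?_⟩
  rw [h1]
  have harsinh : Real.arsinh 1 = Real.log (1 + Real.sqrt 2) := by
    rw [Real.arsinh]
    norm_num [add_comm]
  have hv : sinh (Real.log (1 + Real.sqrt 2)) = 1 := by
    rw [← harsinh, Real.sinh_arsinh]
  constructor
  · intro h
    rw [← hv] at h
    exact Real.sinh_lt_sinh.1 h
  · intro h
    have := Real.sinh_lt_sinh.2 h
    rwa [hv] at this
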